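/- arXiv:2208.05869 — 2 statements merged into one kernel-verified Lean document; each statement's English description precedes it below -/
import Mathlib

section
/- Every left duo, l.f.g.u. monoid satisfies the ACCP: if H is a left duo monoid such that, for every ∣_H-non-unit x, the smallest divisor-closed submonoid ⟦x⟧_H of H containing x is f.g.u., then there is no infinite sequence x₁, x₂, … in H with Hxᵢ H strictly contained in Hx_{i+1}H for every i. -/
open Pointwise

namespace FactPaper

/-- `u` is a `≼`-unit for the preorder-like relation `r` on a monoid. -/
def RUnit {M : Type*} [Monoid M] (r : M → M → Prop) (u : M) : Prop :=
  r u 1 ∧ r 1 u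

/-- `u` is a `≼`-non-unit. -/
def RNonUnit {M : Type*} [Monoid M] (r : M → M → Prop) (u : M) : Prop :=
  ¬ RUnit r u

/-- The strict part `≺` of the relation `r`. -/
def RLt {M : Type*} (r : M → M → Prop) (x y : M) : Prop :=
  r x y ∧ ¬ r y x

/-- `a` is a `≼`-irreducible. -/
def RIrred {M : Type*} [Monoid M] (r : M → M → Prop) (a : M) : Prop :=
  RNonUnit r a ∧
    ∀ y z : M, RNonUnit r y → RNonUnit r z → RLt r y a → RLt r z a → a ≠ y * z

/-- `a` is a `≼`-atom. -/
def RAtom {M : Type*} [Monoid M] (r : M → M → Prop) (a : M) : Prop :=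
  RNonUnit r a ∧ ∀ y z : M, RNonUnit r y → RNonUnit r z → a ≠ y * z

/-- `a` is a `≼`-quark. -/
def RQuark {M : Type*} [Monoid M] (r : M → M → Prop) (a : M) : Prop :=
  RNonUnit r a ∧ ¬ ∃ b : M, RNonUnit r b ∧ RLt r b a

/-- The divisibility preorder: `Dvd2 x y` iff `y ∈ M x M`. -/
def Dvd2 {M : Type*} [Monoid M] (x y : M) : Prop :=
  ∃ u v : M, y = u * x * v

/-- The restriction of a relation on `M` to a submonoid `K`. -/
def SubRel {M : Type*} [Monoid M] (r : M → M → Prop) (K : Submonoid M) (a b : K) : Prop :=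
  r (a : M) (b : M)

/-- The preorder `⊑` on words induced by `r`: an injection of indices matching
`r`-equivalent letters. -/
def WordLe {M : Type*} (r : M → M → Prop) (l m : List M) : Prop :=
  ∃ σ : Fin l.length ↪ Fin m.length,
    ∀ i : Fin l.length, r (l.get i) (m.get (σ i)) ∧ r (m.get (σ i)) (l.get i)

/-- `⊑`-equivalence of words. -/
def WordEquiv {M : Type*} (r : M → M → Prop) (l m : List M) : Prop :=
  WordLe r l m ∧ WordLe r m l

/-- `l` is a `≼`-factorization of `x`: a word of `≼`-irreducibles with product `x`. -/
def IsFac {M : Type*} [Monoid M] (r : M → M → Prop) (x : M) (l : List M) : Prop :=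
  (∀ a ∈ l, RIrred r a) ∧ l.prod = x

/-- `l` is a minimal `≼`-factorization of `x`: a `⊑`-minimal `≼`-factorization. -/
def IsMinFac {M : Type*} [Monoid M] (r : M → M → Prop) (x : M) (l : List M) : Prop :=
  IsFac r x l ∧ ∀ m : List M, IsFac r x m → WordLe r m l → WordLe r l m

/-- `l` is an atomic `≼`-factorization of `x`. -/
def IsAtomicFac {M : Type*} [Monoid M] (r : M → M → Prop) (x : M) (l : List M) : Prop :=
  (∀ a ∈ l, RAtom r a) ∧ l.prod = x

/-- `l` is a minimal atomic `≼`-factorization of `x`. -/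
def IsMinAtomicFac {M : Type*} [Monoid M] (r : M → M → Prop) (x : M) (l : List M) : Prop :=
  IsMinFac r x l ∧ ∀ a ∈ l, RAtom r a

/-- Every `≼`-non-unit is a non-empty product of `≼`-irreducibles. -/
def Factorable {M : Type*} [Monoid M] (r : M → M → Prop) : Prop :=
  ∀ x : M, RNonUnit r x →
    ∃ l : List M, l ≠ [] ∧ (∀ a ∈ l, RIrred r a) ∧ l.prod = x

/-- Every `≼`-non-unit is a non-empty product of `≼`-atoms. -/
def Atomic {M : Type*} [Monoid M] (r : M → M → Prop) : Prop :=
  ∀ x : M, RNonUnit r x →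
    ∃ l : List M, l ≠ [] ∧ (∀ a ∈ l, RAtom r a) ∧ l.prod = x

/-- The premonoid `(M, r)` is finitely generated up to units. -/
def IsFGU {M : Type*} [Monoid M] (r : M → M → Prop) : Prop :=
  ∃ A : Set M, A.Finite ∧
    Submonoid.closure
      {w : M | ∃ u a v : M, RUnit r u ∧ a ∈ A ∧ RUnit r v ∧ w = u * a * v} = ⊤

/-- The submonoid generated by the `∣_M`-divisors of `x` (ground monoid of the germ of a
premonoid at `x`). -/
def GermSub {M : Type*} [Monoid M] (x : M) : Submonoid M :=
  Submonoid.closure {y : M | Dvd2 y x}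

/-- Membership in the smallest divisor-closed submonoid containing `x`. -/
inductive InDC {M : Type*} [Monoid M] (x : M) : M → Prop
  | base : InDC x x
  | one : InDC x 1
  | mul {a b : M} : InDC x a → InDC x b → InDC x (a * b)
  | dvd {a b : M} : InDC x b → Dvd2 a b → InDC x a

/-- The smallest divisor-closed submonoid of `M` containing `x`. -/
def DCSub {M : Type*} [Monoid M] (x : M) : Submonoid M where
  carrier := {y : M | InDC x y}
  mul_mem' := fun ha hb => InDC.mul ha hb
  one_mem' := InDC.one

/-- `(M, r)` is a weakly positive monoid. -/
def WeaklyPositive {M : Type*} [Monoid M] (r : M → M → Prop) : Prop :=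
  (∀ x u v : M, RUnit r u → RUnit r v → r (u * x * v) x) ∧
    (∀ x a b : M, r x (a * x * b))

/-- `(M, r)` is locally of finite type (loft). -/
def IsLoft {M : Type*} [Monoid M] (r : M → M → Prop) : Prop :=
  ∀ x : M, RNonUnit r x →
    ∃ A : Set M, A.Finite ∧ A ⊆ {a : M | RIrred r a} ∧
      ∀ l : List M, IsFac r x l →
        ∃ m : List M, (∀ a ∈ m, a ∈ A) ∧ WordEquiv r l m

/-- `(M, r)` is BF-factorable. -/
def IsBFFactorable {M : Type*} [Monoid M] (r : M → M → Prop) : Prop :=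
  ∀ x : M, RNonUnit r x →
    {n : ℕ | ∃ l : List M, IsFac r x l ∧ l.length = n}.Finite ∧
      {n : ℕ | ∃ l : List M, IsFac r x l ∧ l.length = n}.Nonempty

/-- `(M, r)` is BmF-factorable. -/
def IsBmFFactorable {M : Type*} [Monoid M] (r : M → M → Prop) : Prop :=
  ∀ x : M, RNonUnit r x →
    {n : ℕ | ∃ l : List M, IsMinFac r x l ∧ l.length = n}.Finite ∧
      {n : ℕ | ∃ l : List M, IsMinFac r x l ∧ l.length = n}.Nonempty

/-- `(M, r)` is FF-factorable: modulo `⊑`-equivalence, every `≼`-non-unit has finitely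
many (and at least one) `≼`-factorizations. -/
def IsFFFactorable {M : Type*} [Monoid M] (r : M → M → Prop) : Prop :=
  ∀ x : M, RNonUnit r x →
    (∃ l : List M, IsFac r x l) ∧
      ∃ F : Set (List M), F.Finite ∧
        ∀ l : List M, IsFac r x l → ∃ m ∈ F, IsFac r x m ∧ WordEquiv r l m

/-- `(M, r)` is FmF-factorable. -/
def IsFmFFactorable {M : Type*} [Monoid M] (r : M → M → Prop) : Prop :=
  ∀ x : M, RNonUnit r x →
    (∃ l : List M, IsMinFac r x l) ∧
      ∃ F : Set (List M), F.Finite ∧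
        ∀ l : List M, IsMinFac r x l → ∃ m ∈ F, IsMinFac r x m ∧ WordEquiv r l m

/-- `(M, r)` is FF-atomic. -/
def IsFFAtomic {M : Type*} [Monoid M] (r : M → M → Prop) : Prop :=
  ∀ x : M, RNonUnit r x →
    (∃ l : List M, IsAtomicFac r x l) ∧
      ∃ F : Set (List M), F.Finite ∧
        ∀ l : List M, IsAtomicFac r x l → ∃ m ∈ F, IsAtomicFac r x m ∧ WordEquiv r l m

/-- `(M, r)` is FmF-atomic. -/
def IsFmFAtomic {M : Type*} [Monoid M] (r : M → M → Prop) : Prop :=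
  ∀ x : M, RNonUnit r x →
    (∃ l : List M, IsMinAtomicFac r x l) ∧
      ∃ F : Set (List M), F.Finite ∧
        ∀ l : List M, IsMinAtomicFac r x l → ∃ m ∈ F, IsMinAtomicFac r x m ∧ WordEquiv r l m


/-- Theorem 5.6. Every left duo, l.f.g.u. monoid satisfies the ACCP:
there is no sequence `x₁, x₂, …` with `H xᵢ H` strictly contained in `H x_{i+1} H` for
every `i`. -/
theorem stmt18 {H : Type*} [Monoid H]
    (hduo : ∀ a b : H, ∃ c : H, a * b = c * a)
    (hlfgu : ∀ x : H, RNonUnit (Dvd2 : H → H → Prop) x →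
      IsFGU (SubRel (Dvd2 : H → H → Prop) (DCSub x))) :
    ¬ ∃ x : ℕ → H, ∀ i : ℕ,
      ((Set.univ : Set H) * {x i} * (Set.univ : Set H)) ⊂
        ((Set.univ : Set H) * {x (i + 1)} * (Set.univ : Set H)) := by
  rintro ⟨x, hx⟩
  have mulrot : ∀ a b z : H, ∃ c, a * (b * z) = c * (a * z) := by
    intro a b z
    obtain ⟨c, hc⟩ := hduo a b
    exact ⟨c, by rw [← mul_assoc, hc, mul_assoc]⟩
  have sublem : ∀ {l' l : List H}, List.Sublist l' l → ∃ c : H, l.prod = c * l'.prod := by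
    intro l' l h
    induction h with
    | slnil => exact ⟨1, by simp⟩
    | cons a h ih =>
      obtain ⟨c, hc⟩ := ih
      exact ⟨a * c, by simp [hc, mul_assoc]⟩
    | cons_cons a h ih =>
      obtain ⟨c, hc⟩ := ih
      obtain ⟨d, hd⟩ := hduo a c
      exact ⟨d, by simp [hc, ← mul_assoc, hd]⟩
  have hmemI : ∀ a b : H, b ∈ (Set.univ : Set H) * {a} * (Set.univ : Set H) ↔ Dvd2 a b := by
    intro a b
    constructor
    · rintro ⟨p, ⟨u, -, y, hy, rfl⟩, v, -, rfl⟩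
      rw [Set.mem_singleton_iff] at hy
      exact ⟨u, v, by rw [hy]⟩
    · rintro ⟨u, v, rfl⟩
      exact ⟨u * a, ⟨u, Set.mem_univ u, a, rfl, rfl⟩, v, Set.mem_univ v, rfl⟩
  have hImono : ∀ a b : H, Dvd2 a b →
      (Set.univ : Set H) * {b} * (Set.univ : Set H) ⊆
      (Set.univ : Set H) * {a} * (Set.univ : Set H) := by
    intro a b hab z hz
    obtain ⟨u, v, rfl⟩ := (hmemI b z).1 hz
    obtain ⟨s, t, rfl⟩ := hab
    exact (hmemI a _).2 ⟨u * s, t * v, by simp [mul_assoc]⟩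
  have hdvd : ∀ i, Dvd2 (x (i + 1)) (x i) := by
    intro i
    exact (hmemI _ _).1 ((hx i).subset ((hmemI _ _).2 ⟨1, 1, by simp⟩))
  have hmono : ∀ i j, i ≤ j →
      (Set.univ : Set H) * {x i} * (Set.univ : Set H) ⊆
      (Set.univ : Set H) * {x j} * (Set.univ : Set H) := by
    intro i j hij
    induction j, hij using Nat.le_induction with
    | base => exact le_refl _
    | succ n hn ih => exact ih.trans (hx n).subset
  have hnd : ∀ i j, i < j → ¬ Dvd2 (x i) (x j) := by
    intro i j hij hd
    exact (hx i).not_subset ((hmono (i + 1) j hij).trans (hImono _ _ hd))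
  have hnu : RNonUnit (Dvd2 : H → H → Prop) (x 0) := by
    rintro ⟨⟨s, t, h1⟩, -⟩
    refine hnd 0 1 Nat.one_pos ⟨x 1 * s, t, ?_⟩
    calc x 1 = x 1 * 1 := (mul_one _).symm
      _ = x 1 * (s * x 0 * t) := by rw [← h1]
      _ = x 1 * s * x 0 * t := by simp [mul_assoc]
  have hK : ∀ i, InDC (x 0) (x i) := by
    intro i
    induction i with
    | zero => exact InDC.base
    | succ n ih => exact InDC.dvd ih (hdvd n)
  obtain ⟨A, hAfin, hAcl⟩ := hlfgu (x 0) hnu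
  have leftinv : ∀ u : DCSub (x 0), RUnit (SubRel (Dvd2 : H → H → Prop) (DCSub (x 0))) u →
      ∃ c : H, c * (u : H) = 1 := by
    intro u hu
    obtain ⟨h1, -⟩ := hu
    obtain ⟨s, t, h1⟩ := h1
    have h1' : (1 : H) = s * (u : H) * t := by simpa using h1
    obtain ⟨c, hc⟩ := hduo (u : H) t
    refine ⟨s * c, ?_⟩
    calc s * c * (u : H) = s * (c * (u : H)) := mul_assoc _ _ _
      _ = s * ((u : H) * t) := by rw [← hc]
      _ = s * (u : H) * t := (mul_assoc _ _ _).symm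
      _ = 1 := h1'.symm
  have keylem : ∀ l : List (DCSub (x 0)),
      (∀ y ∈ l, y ∈ {w : DCSub (x 0) | ∃ u a v : DCSub (x 0),
        RUnit (SubRel (Dvd2 : H → H → Prop) (DCSub (x 0))) u ∧ a ∈ A ∧
        RUnit (SubRel (Dvd2 : H → H → Prop) (DCSub (x 0))) v ∧ w = u * a * v}) →
      ∃ w : List H, (∀ b ∈ w, b ∈ (Subtype.val '' A : Set H)) ∧
        (∃ h : H, ((l.prod : DCSub (x 0)) : H) = h * w.prod) ∧
        (∃ h : H, w.prod = h * ((l.prod : DCSub (x 0)) : H)) := by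
    intro l
    induction l with
    | nil => exact fun _ => ⟨[], by simp, ⟨1, by simp⟩, ⟨1, by simp⟩⟩
    | cons y t ih =>
      intro hyt
      obtain ⟨u, a, v, hu, haA, hv, hy⟩ := hyt y List.mem_cons_self
      obtain ⟨w, hwA, ⟨h, hQ⟩, ⟨h', hP⟩⟩ := ih (fun z hz => hyt z (List.mem_cons_of_mem _ hz))
      obtain ⟨u', hu'⟩ := leftinv u hu
      obtain ⟨v', hv'⟩ := leftinv v hv
      have hprodcons : (((y :: t).prod : DCSub (x 0)) : H)
          = ((u : H) * a * v) * ((t.prod : DCSub (x 0)) : H) := by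
        simp [hy, mul_assoc]
      refine ⟨(a : H) :: w, ?_, ?_, ?_⟩
      · intro b hb
        rcases List.mem_cons.1 hb with rfl | hb
        · exact ⟨a, haA, rfl⟩
        · exact hwA b hb
      · obtain ⟨c1, hc1⟩ := mulrot ((u : H) * a) (v : H) ((t.prod : DCSub (x 0)) : H)
        obtain ⟨c2, hc2⟩ := mulrot (a : H) h w.prod
        obtain ⟨c3, hc3⟩ := mulrot (u : H) c2 ((a : H) * w.prod)
        refine ⟨c1 * (c3 * u), ?_⟩
        rw [hprodcons, List.prod_cons]
        calc ((u : H) * a * v) * ((t.prod : DCSub (x 0)) : H)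
            = ((u : H) * a) * ((v : H) * ((t.prod : DCSub (x 0)) : H)) := by
              simp only [mul_assoc]
          _ = c1 * (((u : H) * a) * ((t.prod : DCSub (x 0)) : H)) := hc1
          _ = c1 * (((u : H) * a) * (h * w.prod)) := by rw [hQ]
          _ = c1 * ((u : H) * ((a : H) * (h * w.prod))) := by simp only [mul_assoc]
          _ = c1 * ((u : H) * (c2 * ((a : H) * w.prod))) := by rw [hc2]
          _ = c1 * (c3 * ((u : H) * ((a : H) * w.prod))) := by rw [hc3]
          _ = c1 * (c3 * u) * ((a : H) * w.prod) := by simp only [mul_assoc]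
      · obtain ⟨d1, hd1⟩ := mulrot (a : H) h' ((t.prod : DCSub (x 0)) : H)
        obtain ⟨d2, hd2⟩ := mulrot (a : H) v' ((v : H) * ((t.prod : DCSub (x 0)) : H))
        refine ⟨d1 * (d2 * u'), ?_⟩
        rw [hprodcons, List.prod_cons]
        calc (a : H) * w.prod
            = (a : H) * (h' * ((t.prod : DCSub (x 0)) : H)) := by rw [hP]
          _ = d1 * ((a : H) * ((t.prod : DCSub (x 0)) : H)) := hd1
          _ = d1 * ((a : H) * ((v' * (v : H)) * ((t.prod : DCSub (x 0)) : H))) := by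
              rw [hv', one_mul]
          _ = d1 * ((a : H) * (v' * ((v : H) * ((t.prod : DCSub (x 0)) : H)))) := by
              simp only [mul_assoc]
          _ = d1 * (d2 * ((a : H) * ((v : H) * ((t.prod : DCSub (x 0)) : H)))) := by rw [hd2]
          _ = d1 * (d2 * ((u' * (u : H)) * ((a : H) * ((v : H) *
                ((t.prod : DCSub (x 0)) : H))))) := by rw [hu', one_mul]
          _ = d1 * (d2 * u') * (((u : H) * a * v) * ((t.prod : DCSub (x 0)) : H)) := by
              simp only [mul_assoc]
  have hmemcl : ∀ i, (⟨x i, hK i⟩ : DCSub (x 0)) ∈ Submonoid.closure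
      {w : DCSub (x 0) | ∃ u a v : DCSub (x 0),
        RUnit (SubRel (Dvd2 : H → H → Prop) (DCSub (x 0))) u ∧ a ∈ A ∧
        RUnit (SubRel (Dvd2 : H → H → Prop) (DCSub (x 0))) v ∧ w = u * a * v} := by
    intro i
    rw [hAcl]
    exact Submonoid.mem_top _
  have hlists := fun i => Submonoid.exists_list_of_mem_closure (hmemcl i)
  choose L hLW hLprod using hlists
  have hco : ∀ i, (((L i).prod : DCSub (x 0)) : H) = x i :=
    fun i => congrArg Subtype.val (hLprod i)
  have hkey := fun i => keylem (L i) (hLW i)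
  choose w hwA hw1 hw2 using hkey
  have hS : (Subtype.val '' A : Set H).Finite := hAfin.image _
  have hpwo : (Subtype.val '' A : Set H).PartiallyWellOrderedOn (· = ·) :=
    hS.partiallyWellOrderedOn
  have hlist := Set.PartiallyWellOrderedOn.partiallyWellOrderedOn_sublistForall₂
    (fun a b : H => a = b) hpwo
  obtain ⟨i, j, hij, hsl⟩ := hlist (fun n => ⟨w n, hwA n⟩)
  have hsubl : List.Sublist (w i) (w j) := by
    obtain ⟨l', hf, hs⟩ := List.sublistForall₂_iff.1 hsl
    rw [List.forall₂_eq_eq_eq] at hf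
    rwa [← hf] at hs
  obtain ⟨c, hc⟩ := sublem hsubl
  obtain ⟨h1, hh1⟩ := hw1 j
  obtain ⟨h2, hh2⟩ := hw2 i
  refine hnd i j hij ⟨h1 * (c * h2), 1, ?_⟩
  calc x j = h1 * (w j).prod := by rw [← hco j, hh1]
    _ = h1 * (c * (w i).prod) := by rw [hc]
    _ = h1 * (c * (h2 * x i)) := by rw [hh2, hco i]
    _ = h1 * (c * h2) * x i * 1 := by simp [mul_assoc]

end FactPaper
end

section
/- In a left duo, l.f.g.u. monoid H, every non-unit (element not in the group H^× of invertible elements) factors as a non-empty product of irreducibles of the premonoid (H, ∣_H). -/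
open Pointwise

namespace FactPaper

/-! ### Auxiliary machinery for `stmt19` -/

section Aux

variable {H : Type*} [Monoid H]

theorem dvd2_refl (x : H) : Dvd2 x x := ⟨1, 1, by simp⟩

theorem dvd2_trans {x y z : H} (h : Dvd2 x y) (h' : Dvd2 y z) : Dvd2 x z := by
  obtain ⟨u, v, rfl⟩ := h
  obtain ⟨s, t, rfl⟩ := h'
  exact ⟨s * u, v * t, by simp [mul_assoc]⟩

/-- Divisibility-equivalence. -/
def DEq (a b : H) : Prop := Dvd2 a b ∧ Dvd2 b a

theorem dEq_refl (x : H) : DEq x x := ⟨dvd2_refl x, dvd2_refl x⟩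

theorem dEq_symm {x y : H} (h : DEq x y) : DEq y x := ⟨h.2, h.1⟩

theorem dEq_trans {x y z : H} (h : DEq x y) (h' : DEq y z) : DEq x z :=
  ⟨dvd2_trans h.1 h'.1, dvd2_trans h'.2 h.2⟩

instance : IsRefl H (DEq : H → H → Prop) := ⟨dEq_refl⟩
instance : IsTrans H (DEq : H → H → Prop) := ⟨fun _ _ _ => dEq_trans⟩
instance : IsPreorder H (DEq : H → H → Prop) where
  refl := dEq_refl
  trans := fun _ _ _ => dEq_trans

/-- The strict divisibility relation used for well-founded recursion. -/
def TRel (y x : H) : Prop :=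
  RNonUnit (Dvd2 : H → H → Prop) y ∧ RNonUnit (Dvd2 : H → H → Prop) x ∧
    RLt (Dvd2 : H → H → Prop) y x

instance : IsIrrefl H (TRel : H → H → Prop) := ⟨fun _ h => h.2.2.2 h.2.2.1⟩

instance : IsTrans H (TRel : H → H → Prop) :=
  ⟨fun _ _ _ h h' => ⟨h.1, h'.2.1,
    dvd2_trans h.2.2.1 h'.2.2.1, fun hd => h'.2.2.2 (dvd2_trans hd h.2.2.1)⟩⟩

instance : IsStrictOrder H (TRel : H → H → Prop) := {}

section Duo

variable (hduo : ∀ a b : H, ∃ c : H, a * b = c * a)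
include hduo

/-- In a left duo monoid, divisibility is right divisibility. -/
theorem dvd2_exists_left {y x : H} (h : Dvd2 y x) : ∃ c : H, x = c * y := by
  obtain ⟨u, v, rfl⟩ := h
  obtain ⟨c, hc⟩ := hduo y v
  exact ⟨u * c, by rw [mul_assoc, hc, ← mul_assoc]⟩

/-- In a left duo monoid, left-invertible elements are units. -/
theorem isUnit_of_left_inv {s z : H} (h : s * z = 1) : IsUnit z := by
  obtain ⟨c, hc⟩ := hduo s z
  have hcs : c * s = 1 := by rw [← hc, h]
  have hz : z = c := by
    calc z = (c * s) * z := by rw [hcs, one_mul]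
      _ = c * (s * z) := by rw [mul_assoc]
      _ = c := by rw [h, mul_one]
  exact ⟨⟨z, s, by rw [hz, hcs], h⟩, rfl⟩

theorem runit_iff_isUnit {z : H} : RUnit (Dvd2 : H → H → Prop) z ↔ IsUnit z := by
  constructor
  · rintro ⟨⟨u, v, h1⟩, -⟩
    obtain ⟨c, hc⟩ := hduo z v
    have : (u * c) * z = 1 := by rw [mul_assoc, ← hc, ← mul_assoc, ← h1]
    exact isUnit_of_left_inv hduo this
  · rintro ⟨w, rfl⟩
    exact ⟨⟨(w⁻¹ : Hˣ), 1, by simp⟩, ⟨(w : H), 1, by simp⟩⟩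

theorem dvd2_mul {a a' b b' : H} (ha : Dvd2 a a') (hb : Dvd2 b b') :
    Dvd2 (a * b) (a' * b') := by
  obtain ⟨s, hs⟩ := dvd2_exists_left hduo ha
  obtain ⟨t, ht⟩ := dvd2_exists_left hduo hb
  obtain ⟨c, hc⟩ := hduo a t
  refine ⟨s * c, 1, ?_⟩
  rw [hs, ht, mul_one]
  calc s * a * (t * b) = s * (a * t) * b := by simp [mul_assoc]
    _ = s * (c * a) * b := by rw [hc]
    _ = s * c * (a * b) := by simp [mul_assoc]

theorem dEq_mul {a a' b b' : H} (ha : DEq a a') (hb : DEq b b') : DEq (a * b) (a' * b') :=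
  ⟨dvd2_mul hduo ha.1 hb.1, dvd2_mul hduo ha.2 hb.2⟩

theorem dvd2_prod_sublist {l l' : List H} (h : l.Sublist l') : Dvd2 l.prod l'.prod := by
  induction h with
  | slnil => exact dvd2_refl _
  | cons a _ ih =>
    obtain ⟨c, hc⟩ := dvd2_exists_left hduo ih
    exact ⟨a * c, 1, by rw [List.prod_cons, hc, mul_one, mul_assoc]⟩
  | cons_cons a _ ih =>
    obtain ⟨c, hc⟩ := dvd2_exists_left hduo ih
    obtain ⟨d, hd⟩ := hduo a c
    refine ⟨d, 1, ?_⟩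
    rw [List.prod_cons, List.prod_cons, hc, mul_one, ← mul_assoc, hd, mul_assoc]

theorem dEq_prod_forall₂ {l l' : List H} (h : List.Forall₂ DEq l l') :
    DEq l.prod l'.prod := by
  induction h with
  | nil => exact dEq_refl _
  | cons ha _ ih =>
    rw [List.prod_cons, List.prod_cons]
    exact dEq_mul hduo ha ih

theorem dvd2_prod_sublistForall₂ {l l' : List H} (h : List.SublistForall₂ DEq l l') :
    Dvd2 l.prod l'.prod := by
  rw [List.sublistForall₂_iff] at h
  obtain ⟨m, hf, hs⟩ := h
  exact dvd2_trans (dEq_prod_forall₂ hduo hf).1 (dvd2_prod_sublist hduo hs)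

end Duo

end Aux


/-- Corollary 5.7. In a left duo, l.f.g.u. monoid, every non-unit
factors as a non-empty product of irreducibles of the premonoid `(H, ∣_H)`. -/
theorem stmt19 {H : Type*} [Monoid H]
    (hduo : ∀ a b : H, ∃ c : H, a * b = c * a)
    (hlfgu : ∀ x : H, RNonUnit (Dvd2 : H → H → Prop) x →
      IsFGU (SubRel (Dvd2 : H → H → Prop) (DCSub x))) :
    ∀ x : H, ¬ IsUnit x →
      ∃ l : List H, l ≠ [] ∧ (∀ a ∈ l, RIrred (Dvd2 : H → H → Prop) a) ∧ l.prod = x := by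
  have hwf : WellFounded (TRel : H → H → Prop) := by
    rw [RelEmbedding.wellFounded_iff_isEmpty]
    refine ⟨fun emb => ?_⟩
    set f : ℕ → H := ⇑emb with hfdef
    have hstep : ∀ n : ℕ, TRel (f (n + 1)) (f n) := fun n =>
      emb.map_rel_iff.2 (Nat.lt_succ_self n)
    have hchain : ∀ m n : ℕ, m ≤ n → Dvd2 (f n) (f m) := by
      intro m n h
      induction n, h using Nat.le_induction with
      | base => exact dvd2_refl _
      | succ n hmn ih => exact dvd2_trans (hstep n).2.2.1 ih
    have hx0 : RNonUnit (Dvd2 : H → H → Prop) (f 0) := (hstep 0).2.1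
    obtain ⟨A, hAfin, hAtop⟩ := hlfgu (f 0) hx0
    set Abar : Set H := insert 1 (Subtype.val '' A) with hAbar
    have hAbarfin : Abar.Finite := (hAfin.image _).insert 1
    -- The set of elements divisibility-equivalent to a generator (or to 1).
    have hSpwo : {y : H | ∃ b ∈ Abar, DEq y b}.PartiallyWellOrderedOn
        (DEq : H → H → Prop) := by
      intro g
      choose b hb hd using fun k => (show ∃ b ∈ Abar, DEq (g k : H) b from (g k).2)
      obtain ⟨m, n, hmn, he⟩ := Set.Finite.exists_lt_map_eq_of_forall_mem hb hAbarfin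
      refine ⟨m, n, hmn, dEq_trans (hd m) ?_⟩
      rw [he]
      exact dEq_symm (hd n)
    have hmemK : ∀ n : ℕ, f n ∈ DCSub (f 0) := by
      intro n
      induction n with
      | zero => exact InDC.base
      | succ n ih => exact InDC.dvd ih (hstep n).2.2.1
    have hcoeUnit : ∀ w : ↥(DCSub (f 0)),
        RUnit (SubRel (Dvd2 : H → H → Prop) (DCSub (f 0))) w → IsUnit (w : H) := by
      rintro w ⟨h1, h2⟩
      simp only [SubRel, OneMemClass.coe_one] at h1 h2
      exact (runit_iff_isUnit hduo).1 ⟨h1, h2⟩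
    have hdecomp : ∀ y : ↥(DCSub (f 0)), ∃ cs : List H,
        (∀ c ∈ cs, c ∈ {y : H | ∃ b ∈ Abar, DEq y b}) ∧ cs.prod = (y : H) := by
      intro y
      have hy : y ∈ Submonoid.closure {w : ↥(DCSub (f 0)) |
          ∃ u a v : ↥(DCSub (f 0)), RUnit (SubRel (Dvd2 : H → H → Prop) (DCSub (f 0))) u ∧
            a ∈ A ∧ RUnit (SubRel (Dvd2 : H → H → Prop) (DCSub (f 0))) v ∧ w = u * a * v} := by
        rw [hAtop]
        exact Submonoid.mem_top y
      refine Submonoid.closure_induction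
        (motive := fun (z : ↥(DCSub (f 0))) _ => ∃ cs : List H,
          (∀ c ∈ cs, c ∈ {y : H | ∃ b ∈ Abar, DEq y b}) ∧ cs.prod = (z : H))
        ?_ ?_ ?_ hy
      · rintro w ⟨u, a, v, hu, haA, hv, rfl⟩
        obtain ⟨U, hU⟩ := hcoeUnit u hu
        obtain ⟨V, hV⟩ := hcoeUnit v hv
        refine ⟨[((u * a * v : ↥(DCSub (f 0))) : H)], ?_, by simp⟩
        intro c hc
        rw [List.mem_singleton] at hc
        subst hc
        refine ⟨(a : H), Set.mem_insert_of_mem _ ⟨a, haA, rfl⟩, ?_, ?_⟩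
        · refine ⟨(U⁻¹ : Hˣ), (V⁻¹ : Hˣ), ?_⟩
          simp only [Submonoid.coe_mul]
          rw [← hU, ← hV]
          simp [mul_assoc]
        · exact ⟨(u : H), (v : H), by simp [mul_assoc]⟩
      · exact ⟨[], by simp, by simp⟩
      · rintro p q hp hq ⟨cs, h1, h2⟩ ⟨cs', h1', h2'⟩
        refine ⟨cs ++ cs', ?_, ?_⟩
        · intro c hc
          rcases List.mem_append.1 hc with h | h
          exacts [h1 c h, h1' c h]
        · simp [List.prod_append, h2, h2']
    choose cs hcsS hcsprod using fun n => hdecomp ⟨f n, hmemK n⟩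
    obtain ⟨m, n, hmn, hsub⟩ :=
      (Set.PartiallyWellOrderedOn.partiallyWellOrderedOn_sublistForall₂
        (DEq : H → H → Prop) hSpwo) (fun k => ⟨cs k, fun c hc => hcsS k c hc⟩)
    have hdvd : Dvd2 (f m) (f n) := by
      have h := dvd2_prod_sublistForall₂ (l := cs m) (l' := cs n) hduo hsub
      rw [hcsprod m, hcsprod n] at h
      exact h
    exact (hstep m).2.2.2 (dvd2_trans hdvd (hchain (m + 1) n hmn))
  have key : ∀ x : H, RNonUnit (Dvd2 : H → H → Prop) x →
      ∃ l : List H, l ≠ [] ∧ (∀ a ∈ l, RIrred (Dvd2 : H → H → Prop) a) ∧ l.prod = x := by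
    intro x
    refine hwf.induction
      (C := fun x => RNonUnit (Dvd2 : H → H → Prop) x →
        ∃ l : List H, l ≠ [] ∧ (∀ a ∈ l, RIrred (Dvd2 : H → H → Prop) a) ∧ l.prod = x)
      x ?_
    intro x IH hx
    by_cases hirr : RIrred (Dvd2 : H → H → Prop) x
    · exact ⟨[x], by simp, by simpa using hirr, by simp⟩
    · have hex : ∃ y z : H, RNonUnit (Dvd2 : H → H → Prop) y ∧
          RNonUnit (Dvd2 : H → H → Prop) z ∧ RLt (Dvd2 : H → H → Prop) y x ∧
          RLt (Dvd2 : H → H → Prop) z x ∧ x = y * z := by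
        by_contra hcon
        push_neg at hcon
        exact hirr ⟨hx, hcon⟩
      obtain ⟨y, z, hy, hz, hly, hlz, hxyz⟩ := hex
      obtain ⟨ly, hly1, hly2, hly3⟩ := IH y ⟨hy, hx, hly⟩ hy
      obtain ⟨lz, hlz1, hlz2, hlz3⟩ := IH z ⟨hz, hx, hlz⟩ hz
      refine ⟨ly ++ lz, ?_, ?_, ?_⟩
      · simp [hly1]
      · intro a ha
        rcases List.mem_append.1 ha with h | h
        exacts [hly2 a h, hlz2 a h]
      · rw [List.prod_append, hly3, hlz3, hxyz]
  intro x hxu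
  exact key x (fun hr => hxu ((runit_iff_isUnit hduo).1 hr))

end FactPaper
end
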